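/- Let F be a complete discretely valued field of characteristic 2 with finite residue field, valuation ring O, and a ∈ O. If c ∈ F× has odd valuation, then x² + xy + ay² = c is solvable in F if and only if X² + X + a has a root in the residue field (equivalently, in F). -/

import Mathlib

set_option linter.unusedSectionVars false

section Aux

variable {O : Type*} [CommRing O] [IsDomain O] [IsDiscreteValuationRing O]
variable {K : Type*} [Field K] [Algebra O K] [IsFractionRing O K]

lemma aux_pow_ne_unit (π : O) (hπ : Irreducible π) (u v : Oˣ) (k : ℕ) (hk : k ≠ 0)
    (h : π ^ k * (u : O) = (v : O)) : False := by
  have h1 : π ^ k = (v : O) * ((u⁻¹ : Oˣ) : O) := by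
    have := congrArg (· * ((u⁻¹ : Oˣ) : O)) h
    simpa [mul_assoc] using this
  have h2 : IsUnit (π ^ k) := h1 ▸ ((v.isUnit).mul (u⁻¹).isUnit)
  exact hπ.not_isUnit ((isUnit_pow_iff hk).mp h2)

lemma aux_pow_ne_unit_K (π : O) (hπ : Irreducible π) (u v : Oˣ) (k : ℕ) (hk : k ≠ 0)
    (h : (algebraMap O K π) ^ k * algebraMap O K (u : O) = algebraMap O K (v : O)) : False := by
  apply aux_pow_ne_unit π hπ u v k hk
  apply IsFractionRing.injective O K
  rw [map_mul, map_pow]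
  exact h

lemma aux_zpow_eq (π : O) (hπ : Irreducible π) {i j : ℤ} (u v : Oˣ)
    (h : (algebraMap O K π) ^ i * algebraMap O K (u : O)
        = (algebraMap O K π) ^ j * algebraMap O K (v : O)) : i = j := by
  have hP : (algebraMap O K π) ≠ 0 := by
    rw [Ne, map_eq_zero_iff _ (IsFractionRing.injective O K)]
    exact hπ.ne_zero
  by_contra hij
  -- wlog-style: handle both orders
  have key : ∀ (i j : ℤ) (u v : Oˣ), i < j →
      (algebraMap O K π) ^ i * algebraMap O K (u : O)
        = (algebraMap O K π) ^ j * algebraMap O K (v : O) → False := by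
    intro i j u v hlt heq
    obtain ⟨k, hk, hk0⟩ : ∃ k : ℕ, j = i + k ∧ k ≠ 0 :=
      ⟨(j - i).toNat, by omega, by omega⟩
    subst hk
    rw [zpow_add₀ hP, zpow_natCast, mul_assoc] at heq
    have heq2 : (algebraMap O K π) ^ k * algebraMap O K (v : O) = algebraMap O K (u : O) :=
      (mul_left_cancel₀ (zpow_ne_zero i hP) heq).symm
    exact aux_pow_ne_unit_K π hπ v u k hk0 heq2
  rcases lt_or_gt_of_ne hij with hlt | hlt
  · exact key i j u v hlt h
  · exact key j i v u hlt h.symm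

lemma aux_pair_decomp (π : O) (hπ : Irreducible π) (X Y : O) (h : ¬(X = 0 ∧ Y = 0)) :
    ∃ (m : ℕ) (x₀ y₀ : O), X = π ^ m * x₀ ∧ Y = π ^ m * y₀ ∧ (IsUnit x₀ ∨ IsUnit y₀) := by
  by_cases hX : X = 0
  · have hY : Y ≠ 0 := fun hY => h ⟨hX, hY⟩
    obtain ⟨n, v, hv⟩ := IsDiscreteValuationRing.eq_unit_mul_pow_irreducible hY hπ
    exact ⟨n, 0, v, by simp [hX], by rw [hv]; ring, Or.inr v.isUnit⟩
  · by_cases hY : Y = 0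
    · obtain ⟨n, uu, hu⟩ := IsDiscreteValuationRing.eq_unit_mul_pow_irreducible hX hπ
      exact ⟨n, uu, 0, by rw [hu]; ring, by simp [hY], Or.inl uu.isUnit⟩
    · obtain ⟨i, uu, hu⟩ := IsDiscreteValuationRing.eq_unit_mul_pow_irreducible hX hπ
      obtain ⟨j, v, hv⟩ := IsDiscreteValuationRing.eq_unit_mul_pow_irreducible hY hπ
      rcases le_total i j with hle | hle
      · obtain ⟨k, rfl⟩ : ∃ k, j = i + k := ⟨j - i, by omega⟩
        exact ⟨i, uu, (v : O) * π ^ k, by rw [hu]; ring, by rw [hv, pow_add]; ring,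
          Or.inl uu.isUnit⟩
      · obtain ⟨k, rfl⟩ : ∃ k, i = j + k := ⟨i - j, by omega⟩
        exact ⟨j, (uu : O) * π ^ k, v, by rw [hu, pow_add]; ring, by rw [hv]; ring,
          Or.inr v.isUnit⟩

end Aux

/-- Over a local field `K` of characteristic 2 (fraction field of a complete DVR `O` with
finite residue field), for `a ∈ O` and `c ∈ K×` of odd valuation, the equation
`x² + xy + ay² = c` is solvable in `K` iff `X² + X + a` has a root in `K`. -/
theorem stmt11 (O : Type*) [CommRing O] [IsDomain O] [IsDiscreteValuationRing O]
    [IsAdicComplete (IsLocalRing.maximalIdeal O) O]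
    [Finite (IsLocalRing.ResidueField O)]
    (K : Type*) [Field K] [Algebra O K] [IsFractionRing O K] [CharP K 2]
    (π : O) (hπ : Irreducible π) (a : O) (c : K) (hc : c ≠ 0)
    (hodd : ∃ (u : Oˣ) (n : ℤ), c = algebraMap O K u * (algebraMap O K π)^(2*n+1)) :
    (∃ x y : K, x^2 + x*y + algebraMap O K a * y^2 = c) ↔
      (∃ r : K, r^2 + r + algebraMap O K a = 0) := by
  have hinj : Function.Injective (algebraMap O K) := IsFractionRing.injective O K
  have h2K : (2 : K) = 0 := by
    have := CharP.cast_eq_zero K 2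
    exact_mod_cast this
  haveI : CharP O 2 := (algebraMap O K).charP hinj 2
  have h2O : (2 : O) = 0 := by
    have := CharP.cast_eq_zero O 2
    exact_mod_cast this
  have hP : (algebraMap O K π) ≠ 0 := by
    rw [Ne, map_eq_zero_iff _ hinj]
    exact hπ.ne_zero
  constructor
  · -- forward: solvability implies a root
    rintro ⟨x, y, hxy⟩
    by_contra hnr
    -- write x, y with a common denominator
    obtain ⟨x₁, d₁, hd₁, hx1⟩ := IsFractionRing.div_surjective (A := O) x
    obtain ⟨y₁, d₂, hd₂, hy1⟩ := IsFractionRing.div_surjective (A := O) y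
    have hD₁ : algebraMap O K d₁ ≠ 0 := fun h =>
      nonZeroDivisors.ne_zero hd₁ (hinj (by simpa using h))
    have hD₂ : algebraMap O K d₂ ≠ 0 := fun h =>
      nonZeroDivisors.ne_zero hd₂ (hinj (by simpa using h))
    set X := x₁ * d₂ with hXdef
    set Y := y₁ * d₁ with hYdef
    set d := d₁ * d₂ with hddef
    have hd : algebraMap O K d ≠ 0 := by
      rw [hddef, map_mul]; exact mul_ne_zero hD₁ hD₂
    have hX : algebraMap O K X = x * algebraMap O K d := by
      rw [hXdef, hddef, map_mul, map_mul, ← hx1]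
      field_simp
    have hY : algebraMap O K Y = y * algebraMap O K d := by
      rw [hYdef, hddef, map_mul, map_mul, ← hy1]
      field_simp
    clear_value X Y d
    -- X, Y not both zero
    have hXY0 : ¬(X = 0 ∧ Y = 0) := by
      rintro ⟨hX0, hY0⟩
      have hx0 : x = 0 := by
        have := hX; rw [hX0, map_zero] at this
        rcases mul_eq_zero.mp this.symm with h | h
        · exact h
        · exact absurd h hd
      have hy0 : y = 0 := by
        have := hY; rw [hY0, map_zero] at this
        rcases mul_eq_zero.mp this.symm with h | h
        · exact h
        · exact absurd h hd
      rw [hx0, hy0] at hxy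
      apply hc
      rw [← hxy]; ring
    obtain ⟨m, x₀, y₀, hXm, hYm, hunit⟩ := aux_pair_decomp π hπ X Y hXY0
    -- Q₀ is a unit
    set Q₀ := x₀ ^ 2 + x₀ * y₀ + a * y₀ ^ 2 with hQ₀def
    have hQ₀unit : IsUnit Q₀ := by
      rw [← IsLocalRing.notMem_maximalIdeal]
      intro hQm
      have hprime : (IsLocalRing.maximalIdeal O).IsPrime :=
        (IsLocalRing.maximalIdeal.isMaximal O).isPrime
      by_cases hy₀ : IsUnit y₀
      · -- Hensel lifting
        obtain ⟨v, hv⟩ := hy₀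
        set a₀ := x₀ * ((v⁻¹ : Oˣ) : O) with ha₀def
        have hvv : (v : O) * ((v⁻¹ : Oˣ) : O) = 1 := v.mul_inv
        have hkey : (v : O) ^ 2 * (a₀ ^ 2 + a₀ + a) = Q₀ := by
          rw [hQ₀def, ha₀def, ← hv]
          linear_combination (x₀ ^ 2 * ((v : O) * ((v⁻¹ : Oˣ) : O) + 1) + x₀ * (v : O)) * hvv
        have heval : a₀ ^ 2 + a₀ + a ∈ IsLocalRing.maximalIdeal O := by
          rcases hprime.mem_or_mem (hkey ▸ hQm) with h | h
          · exact absurd h (by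
              rw [IsLocalRing.notMem_maximalIdeal]
              exact (v.isUnit).pow 2)
          · exact h
        set f : Polynomial O := Polynomial.X ^ 2 + Polynomial.X + Polynomial.C a with hfdef
        have hmonic : f.Monic := by
          rw [hfdef, add_assoc]
          apply Polynomial.monic_X_pow_add
          apply lt_of_le_of_lt (Polynomial.degree_add_le _ _)
          rw [Polynomial.degree_X]
          exact max_lt (by norm_num)
            (lt_of_le_of_lt Polynomial.degree_C_le (by norm_num))
        have hfeval : f.eval a₀ = a₀ ^ 2 + a₀ + a := by
          simp [hfdef]
        have hfder : f.derivative.eval a₀ = 1 := by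
          simp [hfdef, h2O, one_add_one_eq_two]
        obtain ⟨r, hroot, -⟩ := HenselianRing.is_henselian (I := IsLocalRing.maximalIdeal O)
          f hmonic a₀ (by rw [hfeval]; exact heval)
          (by rw [hfder, map_one]; exact isUnit_one)
        apply hnr
        refine ⟨algebraMap O K r, ?_⟩
        have hr : r ^ 2 + r + a = 0 := by
          have := hroot
          simpa [hfdef, Polynomial.IsRoot, Polynomial.eval_add, Polynomial.eval_pow] using this
        have := congrArg (algebraMap O K) hr
        rw [map_add, map_add, map_pow, map_zero] at this
        exact this
      · -- y₀ not a unit, x₀ is a unit; contradiction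
        have hx₀ : IsUnit x₀ := hunit.resolve_right hy₀
        have hy₀m : y₀ ∈ IsLocalRing.maximalIdeal O := by
          rwa [IsLocalRing.mem_maximalIdeal, mem_nonunits_iff]
        have hx₀2 : x₀ ^ 2 ∈ IsLocalRing.maximalIdeal O := by
          have : x₀ ^ 2 = Q₀ - (x₀ + a * y₀) * y₀ := by rw [hQ₀def]; ring
          rw [this]
          exact Ideal.sub_mem _ hQm (Ideal.mul_mem_left _ _ hy₀m)
        rcases hprime.mem_or_mem (by rwa [sq] at hx₀2) with h | h <;>
          exact (IsLocalRing.notMem_maximalIdeal.mpr hx₀) h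
    obtain ⟨u₀, hu₀⟩ := hQ₀unit
    -- decompose d
    have hdne : d ≠ 0 := fun h => hd (by rw [h, map_zero])
    obtain ⟨e, ud, hud⟩ := IsDiscreteValuationRing.eq_unit_mul_pow_irreducible hdne hπ
    -- main valuation computation
    obtain ⟨u, n, hcval⟩ := hodd
    have hE2 : X ^ 2 + X * Y + a * Y ^ 2 = π ^ (2 * m) * (u₀ : O) := by
      rw [hXm, hYm, hu₀, hQ₀def]; ring
    have hE1 : c * (algebraMap O K d) ^ 2
        = (algebraMap O K π) ^ (2 * m) * algebraMap O K (u₀ : O) := by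
      have h1 := congrArg (algebraMap O K) hE2
      simp only [map_add, map_mul, map_pow, hX, hY] at h1
      rw [← hxy]
      linear_combination h1
    -- convert to zpow equation
    have hfinal : (algebraMap O K π) ^ ((2 * n + 1) + (2 * e : ℤ))
          * algebraMap O K ((u * ud ^ 2 : Oˣ) : O)
        = (algebraMap O K π) ^ ((2 * m : ℕ) : ℤ) * algebraMap O K ((u₀ : O)) := by
      rw [zpow_add₀ hP, zpow_natCast]
      rw [show (2 * e : ℤ) = ((2 * e : ℕ) : ℤ) by push_cast; ring, zpow_natCast]
      rw [Units.val_mul, Units.val_pow_eq_pow_val, map_mul, map_pow]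
      rw [hcval, hud, map_mul, map_pow] at hE1
      rw [← hE1, mul_pow, ← pow_mul]
      ring
    have := aux_zpow_eq (K := K) π hπ (u * ud ^ 2) u₀ hfinal
    omega
  · -- backward: root gives solvability
    rintro ⟨r, hr⟩
    refine ⟨c + r * (c + 1), c + 1, ?_⟩
    linear_combination (c + 1) ^ 2 * hr + (c ^ 2 + r * c ^ 2 + r * c) * h2K
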